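/- Any generalized piecewise linear (GPL) scoring function S(x,y) = (1(x ≥ y) − α)(g(x) − g(y)), with g nondecreasing, is consistent for the α-quantile relative to probability measures F with E_F[g(Y)] finite; if g is strictly increasing, S is strictly consistent for the α-quantile. -/

import Mathlib

open MeasureTheory Set

private lemma gpl_integrable (α : ℝ) (g : ℝ → ℝ) (F : Measure ℝ) [IsProbabilityMeasure F]
    (hint : Integrable g F) (x : ℝ) :
    Integrable (fun y => ((if y ≤ x then (1:ℝ) else 0) - α) * (g x - g y)) F := by
  have h : (fun y => ((if y ≤ x then (1:ℝ) else 0) - α) * (g x - g y))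
      = fun y => (Iic x).indicator (fun y => g x - g y) y - α * (g x - g y) := by
    funext y
    by_cases h : y ≤ x <;> simp [indicator_apply, h] <;> ring
  rw [h]
  exact (((integrable_const (g x)).sub hint).indicator measurableSet_Iic).sub
    (((integrable_const (g x)).sub hint).const_mul α)

private lemma gpl_key_gt (α : ℝ) (g : ℝ → ℝ) (F : Measure ℝ) [IsProbabilityMeasure F]
    (hint : Integrable g F) {t x : ℝ} (htx : t < x) :
    (∫ y, ((if y ≤ x then (1:ℝ) else 0) - α) * (g x - g y) ∂F)
      - ∫ y, ((if y ≤ t then (1:ℝ) else 0) - α) * (g t - g y) ∂F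
    = (g x - g t) * ((F (Iic t)).toReal - α) + ∫ y in Ioc t x, (g x - g y) ∂F := by
  rw [← integral_sub (gpl_integrable α g F hint x) (gpl_integrable α g F hint t)]
  have h : (fun y => ((if y ≤ x then (1:ℝ) else 0) - α) * (g x - g y)
      - ((if y ≤ t then (1:ℝ) else 0) - α) * (g t - g y))
      = fun y => (g x - g t) * ((Iic t).indicator (fun _ => (1:ℝ)) y - α)
        + (Ioc t x).indicator (fun y => g x - g y) y := by
    funext y
    by_cases h1 : y ≤ t
    · have h2 : y ≤ x := h1.trans htx.le
      simp only [indicator_apply, mem_Iic, mem_Ioc, h1, h2, if_true, not_lt.2 h1, false_and,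
        if_false]
      ring
    · by_cases h2 : y ≤ x
      · simp only [indicator_apply, mem_Iic, mem_Ioc, h1, h2, if_true, if_false, not_le.1 h1,
          true_and, if_true]
        ring
      · simp only [indicator_apply, mem_Iic, mem_Ioc, h1, h2, if_false, and_false]
        ring
  have i1a : Integrable (fun y => (Iic t).indicator (fun _ => (1:ℝ)) y) F :=
    (integrable_const (1:ℝ)).indicator measurableSet_Iic
  have i1 : Integrable (fun y => (g x - g t) * ((Iic t).indicator (fun _ => (1:ℝ)) y - α)) F := by
    apply Integrable.const_mul
    exact i1a.sub (integrable_const α)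
  have i2 : Integrable (fun y => (Ioc t x).indicator (fun y => g x - g y) y) F :=
    ((integrable_const (g x)).sub hint).indicator measurableSet_Ioc
  rw [h, integral_add i1 i2, integral_const_mul,
    integral_sub i1a (integrable_const α),
    integral_indicator_const _ measurableSet_Iic, integral_indicator measurableSet_Ioc]
  simp [measureReal_def]

private lemma gpl_key_lt (α : ℝ) (g : ℝ → ℝ) (F : Measure ℝ) [IsProbabilityMeasure F]
    (hint : Integrable g F) {t x : ℝ} (hxt : x < t) :
    (∫ y, ((if y ≤ x then (1:ℝ) else 0) - α) * (g x - g y) ∂F)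
      - ∫ y, ((if y ≤ t then (1:ℝ) else 0) - α) * (g t - g y) ∂F
    = (g t - g x) * (α - (F (Iio t)).toReal) + ∫ y in Ioo x t, (g y - g x) ∂F := by
  rw [← integral_sub (gpl_integrable α g F hint x) (gpl_integrable α g F hint t)]
  have h : (fun y => ((if y ≤ x then (1:ℝ) else 0) - α) * (g x - g y)
      - ((if y ≤ t then (1:ℝ) else 0) - α) * (g t - g y))
      = fun y => (g t - g x) * (α - (Iio t).indicator (fun _ => (1:ℝ)) y)
        + (Ioo x t).indicator (fun y => g y - g x) y := by
    funext y
    by_cases h1 : y ≤ x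
    · have h2 : y ≤ t := h1.trans hxt.le
      have h3 : y < t := lt_of_le_of_lt h1 hxt
      simp only [indicator_apply, mem_Iio, mem_Ioo, h1, h2, h3, if_true, not_lt.2 h1, false_and,
        if_false]
      ring
    · by_cases h2 : y < t
      · have h3 : y ≤ t := h2.le
        simp only [indicator_apply, mem_Iio, mem_Ioo, h1, h2, h3, if_true, if_false,
          not_le.1 h1, true_and]
        ring
      · have h3 : ¬ y ∈ Ioo x t := fun hm => h2 hm.2
        by_cases h4 : y ≤ t
        · simp only [indicator_apply, mem_Iio, mem_Ioo, h1, h2, h3, h4, if_true, if_false]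
          have : y = t := le_antisymm h4 (not_lt.1 h2)
          rw [this]
          ring
        · simp only [indicator_apply, mem_Iio, mem_Ioo, h1, h2, h3, h4, if_false]
          ring
  have i1a : Integrable (fun y => (Iio t).indicator (fun _ => (1:ℝ)) y) F :=
    (integrable_const (1:ℝ)).indicator measurableSet_Iio
  have i1 : Integrable (fun y => (g t - g x) * (α - (Iio t).indicator (fun _ => (1:ℝ)) y)) F := by
    apply Integrable.const_mul
    exact (integrable_const α).sub i1a
  have i2 : Integrable (fun y => (Ioo x t).indicator (fun y => g y - g x) y) F :=
    (hint.sub (integrable_const (g x))).indicator measurableSet_Ioo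
  rw [h, integral_add i1 i2, integral_const_mul,
    integral_sub (integrable_const α) i1a,
    integral_indicator_const _ measurableSet_Iio, integral_indicator measurableSet_Ioo]
  simp [measureReal_def]

/-- Theorem 9(b,c) of the paper, sufficiency: any generalized piecewise
linear (GPL) scoring function `S(x,y) = (1(x ≥ y) − α)(g(x) − g(y))` with `g`
nondecreasing is consistent for the α-quantile; if `g` is strictly
increasing, it is strictly consistent. -/
theorem gpl_consistent_for_quantile
    (α : ℝ) (hα : α ∈ Ioo (0:ℝ) 1)
    (I : Set ℝ) (hI : Convex ℝ I)
    (g : ℝ → ℝ) (hg : MonotoneOn g I)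
    (F : Measure ℝ) [IsProbabilityMeasure F] (hFI : ∀ᵐ y ∂F, y ∈ I)
    (hint : Integrable (fun y => g y) F) :
    ∀ t ∈ I, ((F (Iio t)).toReal ≤ α ∧ α ≤ (F (Iic t)).toReal) →
      ∀ x ∈ I,
        (∫ y, ((if y ≤ t then (1:ℝ) else 0) - α) * (g t - g y) ∂F ≤
          ∫ y, ((if y ≤ x then (1:ℝ) else 0) - α) * (g x - g y) ∂F) ∧
        (StrictMonoOn g I →
          (∫ y, ((if y ≤ t then (1:ℝ) else 0) - α) * (g t - g y) ∂F) =
            (∫ y, ((if y ≤ x then (1:ℝ) else 0) - α) * (g x - g y) ∂F) →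
          ((F (Iio x)).toReal ≤ α ∧ α ≤ (F (Iic x)).toReal)) := by
  rintro t ht ⟨ht1, ht2⟩ x hx
  rcases lt_trichotomy t x with htx | rfl | hxt
  · -- case t < x
    have key := gpl_key_gt α g F hint htx
    have hA : 0 ≤ (g x - g t) * ((F (Iic t)).toReal - α) :=
      mul_nonneg (sub_nonneg.2 (hg ht hx htx.le)) (sub_nonneg.2 ht2)
    have hBnn : (0:ℝ → ℝ) ≤ᵐ[F.restrict (Ioc t x)] fun y => g x - g y := by
      filter_upwards [ae_restrict_of_ae hFI, ae_restrict_mem measurableSet_Ioc] with y hyI hy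
      exact sub_nonneg.2 (hg hyI hx hy.2)
    have hB : 0 ≤ ∫ y in Ioc t x, (g x - g y) ∂F :=
      integral_nonneg_of_ae hBnn
    constructor
    · linarith
    · intro hs heq
      have hgt : g t < g x := hs ht hx htx
      have hA0 : (g x - g t) * ((F (Iic t)).toReal - α) = 0 := by linarith
      have hB0 : ∫ y in Ioc t x, (g x - g y) ∂F = 0 := by linarith
      have hα' : (F (Iic t)).toReal = α := by
        rcases mul_eq_zero.1 hA0 with h | h
        · exact absurd h (sub_ne_zero.2 hgt.ne')
        · linarith
      have hae : (fun y => g x - g y) =ᵐ[F.restrict (Ioc t x)] 0 :=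
        (integral_eq_zero_iff_of_nonneg_ae hBnn
          (((integrable_const (g x)).sub hint).restrict)).1 hB0
      have hOoo : F (Ioo t x) = 0 := by
        have h1 : ∀ᵐ y ∂(F.restrict (Ioc t x)), y ∉ Ioo t x := by
          filter_upwards [hae, ae_restrict_of_ae hFI] with y hy hyI hmem
          exact absurd hy (sub_ne_zero.2 (hs hyI hx hmem.2).ne')
        have h2 := ae_iff.1 h1
        simp only [not_not, Set.setOf_mem_eq] at h2
        rwa [Measure.restrict_apply' measurableSet_Ioc,
          inter_eq_self_of_subset_left Ioo_subset_Ioc_self] at h2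
      have hIio : F (Iio x) = F (Iic t) := by
        apply le_antisymm
        · calc F (Iio x) ≤ F (Iic t ∪ Ioo t x) := by
                apply measure_mono
                intro y hy
                rcases le_or_gt y t with h | h
                · exact Or.inl h
                · exact Or.inr ⟨h, hy⟩
            _ ≤ F (Iic t) + F (Ioo t x) := measure_union_le _ _
            _ = F (Iic t) := by rw [hOoo, add_zero]
        · exact measure_mono fun y hy => lt_of_le_of_lt hy htx
      refine ⟨?_, ?_⟩
      · rw [hIio, hα']
      · rw [← hα']
        exact ENNReal.toReal_mono (measure_ne_top F _) (measure_mono (Iic_subset_Iic.2 htx.le))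
  · -- case x = t
    exact ⟨le_refl _, fun _ _ => ⟨ht1, ht2⟩⟩
  · -- case x < t
    have key := gpl_key_lt α g F hint hxt
    have hA : 0 ≤ (g t - g x) * (α - (F (Iio t)).toReal) :=
      mul_nonneg (sub_nonneg.2 (hg hx ht hxt.le)) (sub_nonneg.2 ht1)
    have hBnn : (0:ℝ → ℝ) ≤ᵐ[F.restrict (Ioo x t)] fun y => g y - g x := by
      filter_upwards [ae_restrict_of_ae hFI, ae_restrict_mem measurableSet_Ioo] with y hyI hy
      exact sub_nonneg.2 (hg hx hyI hy.1.le)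
    have hB : 0 ≤ ∫ y in Ioo x t, (g y - g x) ∂F :=
      integral_nonneg_of_ae hBnn
    constructor
    · linarith
    · intro hs heq
      have hgt : g x < g t := hs hx ht hxt
      have hA0 : (g t - g x) * (α - (F (Iio t)).toReal) = 0 := by linarith
      have hB0 : ∫ y in Ioo x t, (g y - g x) ∂F = 0 := by linarith
      have hα' : (F (Iio t)).toReal = α := by
        rcases mul_eq_zero.1 hA0 with h | h
        · exact absurd h (sub_ne_zero.2 hgt.ne')
        · linarith
      have hae : (fun y => g y - g x) =ᵐ[F.restrict (Ioo x t)] 0 :=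
        (integral_eq_zero_iff_of_nonneg_ae hBnn
          ((hint.sub (integrable_const (g x))).restrict)).1 hB0
      have hOoo : F (Ioo x t) = 0 := by
        have h1 : ∀ᵐ y ∂(F.restrict (Ioo x t)), y ∉ Ioo x t := by
          filter_upwards [hae, ae_restrict_of_ae hFI] with y hy hyI hmem
          exact absurd hy (sub_ne_zero.2 (hs hx hyI hmem.1).ne')
        have h2 := ae_iff.1 h1
        simp only [not_not, Set.setOf_mem_eq] at h2
        rwa [Measure.restrict_apply' measurableSet_Ioo, inter_self] at h2
      have hIic : F (Iic x) = F (Iio t) := by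
        apply le_antisymm
        · exact measure_mono fun y hy => lt_of_le_of_lt hy hxt
        · calc F (Iio t) ≤ F (Iic x ∪ Ioo x t) := by
                apply measure_mono
                intro y hy
                rcases le_or_gt y x with h | h
                · exact Or.inl h
                · exact Or.inr ⟨h, hy⟩
            _ ≤ F (Iic x) + F (Ioo x t) := measure_union_le _ _
            _ = F (Iic x) := by rw [hOoo, add_zero]
      refine ⟨?_, ?_⟩
      · calc (F (Iio x)).toReal
            ≤ (F (Iic x)).toReal :=
              ENNReal.toReal_mono (measure_ne_top F _) (measure_mono Iio_subset_Iic_self)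
          _ = α := by rw [hIic, hα']
      · rw [hIic, hα']
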